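/- In a first-order model with rank-symmetric variance parameters σ²_k = σ²_{n+1−k} > 0 for k = 1,…,n, the excess growth rate of the reverse-weighted portfolio equals that of the market portfolio: γ*_π(t) = γ*_μ(t) a.s., and consequently γ_π(t) > γ_μ(t) a.s. except on a Lebesgue-null set of times. -/

import Mathlib

open MeasureTheory

private lemma abel_pos (n : ℕ) (hn : 2 ≤ n) (A H : ℕ → ℝ)
    (hA : ∀ i, i + 1 < n → A (i + 1) < A i)
    (hH0 : ∑ i ∈ Finset.range n, H i = 0)
    (hS : ∀ m, 0 < m → m < n → 0 < ∑ j ∈ Finset.range m, H j) :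
    0 < ∑ i ∈ Finset.range n, A i * H i := by
  have hbp := Finset.sum_range_by_parts A H n
  simp only [smul_eq_mul] at hbp
  rw [hbp, hH0, mul_zero, zero_sub]
  have hlt : ∑ i ∈ Finset.range (n - 1), (A (i + 1) - A i) * ∑ j ∈ Finset.range (i + 1), H j
      < ∑ i ∈ Finset.range (n - 1), (0 : ℝ) := by
    apply Finset.sum_lt_sum_of_nonempty
    · exact ⟨0, by simp [Finset.mem_range]; omega⟩
    · intro i hi
      have hi' : i + 1 < n := by simp [Finset.mem_range] at hi; omega
      exact mul_neg_of_neg_of_pos (sub_neg.mpr (hA i hi'))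
        (hS (i + 1) (Nat.succ_pos i) hi')
  rw [Finset.sum_const_zero] at hlt
  linarith

private lemma fin_sum_range_eq (n m : ℕ) (hm : m ≤ n) (f : Fin n → ℝ) :
    ∑ j ∈ Finset.range m, (if h : j < n then f ⟨j, h⟩ else 0)
      = ∑ k ∈ Finset.univ.filter (fun k : Fin n => (k : ℕ) < m), f k := by
  have h1 : ∑ j ∈ Finset.range m, (if h : j < n then f ⟨j, h⟩ else 0)
      = ∑ j ∈ Finset.range n, (if j < m then (if h : j < n then f ⟨j, h⟩ else 0) else 0) := by
    rw [← Finset.sum_filter]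
    congr 1
    ext x
    simp only [Finset.mem_range, Finset.mem_filter]
    omega
  rw [h1, ← Fin.sum_univ_eq_sum_range
    (fun j => if j < m then (if h : j < n then f ⟨j, h⟩ else 0) else 0) n,
    Finset.sum_filter]
  apply Finset.sum_congr rfl
  intro k _
  simp [k.isLt]

private lemma key_ineq (n : ℕ) (hn : 2 ≤ n) (g : Fin n → ℝ)
    (hg0 : ∑ k, g k = 0)
    (hgpart : ∀ m : ℕ, 0 < m → m < n →
      ∑ k ∈ Finset.univ.filter (fun k : Fin n => (k : ℕ) < m), g k < 0)
    (a : Fin n → ℝ) (ha : ∀ k l : Fin n, k < l → a l < a k) :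
    ∑ k, a k * g k < ∑ k, a k.rev * g k := by
  classical
  have hrevsum : ∑ k, a k.rev * g k = ∑ k, a k * g k.rev :=
    Fintype.sum_bijective Fin.rev Fin.rev_bijective _ _ (fun k => by simp [Fin.rev_rev])
  rw [hrevsum, ← sub_pos, ← Finset.sum_sub_distrib]
  have hmulsub : ∀ k : Fin n, a k * g k.rev - a k * g k = a k * (g k.rev - g k) :=
    fun k => by ring
  simp_rw [hmulsub]
  set A : ℕ → ℝ := fun j => if h : j < n then a ⟨j, h⟩ else 0 with hAdef
  set H : ℕ → ℝ := fun j => (if h : j < n then g (⟨j, h⟩ : Fin n).rev else 0)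
      - (if h : j < n then g ⟨j, h⟩ else 0) with hHdef
  -- partial sums of H
  have hrevfilter : ∀ m, m ≤ n →
      ∑ k ∈ Finset.univ.filter (fun k : Fin n => (k : ℕ) < m), g k.rev
      = - ∑ k ∈ Finset.univ.filter (fun k : Fin n => (k : ℕ) < n - m), g k := by
    intro m hm
    rw [Finset.sum_filter]
    have e1 : ∑ k : Fin n, (if (k : ℕ) < m then g k.rev else 0)
        = ∑ k : Fin n, (if ((k.rev : Fin n) : ℕ) < m then g k else 0) :=
      Fintype.sum_bijective Fin.rev Fin.rev_bijective _ _ (fun k => by simp [Fin.rev_rev])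
    rw [e1]
    have e2 : ∀ k : Fin n, (if ((k.rev : Fin n) : ℕ) < m then g k else 0)
        = (if ¬ ((k : ℕ) < n - m) then g k else 0) := by
      intro k
      have hk := k.isLt
      have hiff : (((k.rev : Fin n) : ℕ) < m) ↔ ¬ ((k : ℕ) < n - m) := by
        rw [Fin.val_rev]; omega
      simp only [hiff]
    simp_rw [e2]
    rw [← Finset.sum_filter]
    have hadd := Finset.sum_filter_add_sum_filter_not Finset.univ
      (fun k : Fin n => (k : ℕ) < n - m) g
    rw [hg0] at hadd
    linarith
  have hSpart : ∀ m, m ≤ n → ∑ j ∈ Finset.range m, H j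
      = (- ∑ k ∈ Finset.univ.filter (fun k : Fin n => (k : ℕ) < n - m), g k)
        - ∑ k ∈ Finset.univ.filter (fun k : Fin n => (k : ℕ) < m), g k := by
    intro m hm
    rw [hHdef]
    rw [Finset.sum_sub_distrib,
      fin_sum_range_eq n m hm (fun k => g k.rev), fin_sum_range_eq n m hm g,
      hrevfilter m hm]
  have hconv : ∑ k : Fin n, a k * (g k.rev - g k) = ∑ j ∈ Finset.range n, A j * H j := by
    rw [← Fin.sum_univ_eq_sum_range (fun j => A j * H j) n]
    apply Finset.sum_congr rfl
    intro k _
    simp [hAdef, hHdef, k.isLt]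
  rw [hconv]
  apply abel_pos n hn A H
  · intro i hi
    have hi0 : i < n := by omega
    simp only [hAdef, dif_pos hi, dif_pos hi0]
    exact ha ⟨i, hi0⟩ ⟨i + 1, hi⟩ (by simp [Fin.mk_lt_mk])
  · rw [hSpart n le_rfl]
    have h0 : ∑ k ∈ Finset.univ.filter (fun k : Fin n => (k : ℕ) < n - n), g k = 0 := by
      simp
    have hnn : ∑ k ∈ Finset.univ.filter (fun k : Fin n => (k : ℕ) < n), g k = 0 := by
      rw [Finset.filter_true_of_mem (fun k _ => k.isLt)]
      exact hg0
    rw [h0, hnn]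
    ring
  · intro m hm0 hmn
    rw [hSpart m (le_of_lt hmn)]
    have h1 := hgpart m hm0 hmn
    have h2 := hgpart (n - m) (by omega) (by omega)
    linarith


/-- In a first-order model with rank-symmetric variance parameters
`σ²_k = σ²_{n+1-k} > 0`, the excess growth rate of the reverse-weighted portfolio
equals that of the market, `γ*_π(t) = γ*_μ(t)`, and consequently `γ_π(t) > γ_μ(t)`
for Lebesgue-a.e. `t ∈ [0,∞)`. Since the driving Brownian motions are independent,
the covariance rates are diagonal and
`γ*_μ = (1/2)(∑ μ_{(k)} σ²_k - ∑ μ_{(k)}² σ²_k)`,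
`γ*_π = (1/2)(∑ μ_{(n+1-k)} σ²_k - ∑ μ_{(n+1-k)}² σ²_k)` (0-indexed via `Fin.rev`);
the growth parameters satisfy the first-order stability conditions. -/
theorem reverse_weighted_symmetric_variance (n : ℕ) (hn : 2 ≤ n)
    (g : Fin n → ℝ)
    (hg0 : ∑ k, g k = 0)
    (hgpart : ∀ m : ℕ, 0 < m → m < n →
      ∑ k ∈ Finset.univ.filter (fun k : Fin n => (k : ℕ) < m), g k < 0)
    (σsq : Fin n → ℝ) (hσpos : ∀ k, 0 < σsq k) (hσsym : ∀ k : Fin n, σsq k.rev = σsq k)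
    (μr : Fin n → ℝ → ℝ) (hμpos : ∀ k t, 0 < μr k t)
    (hμsum : ∀ t, ∑ k, μr k t = 1)
    (hrank : ∀ᵐ t ∂(volume.restrict (Set.Ici (0:ℝ))),
      ∀ k l : Fin n, k < l → μr l t < μr k t)
    (γsμ γsπ : ℝ → ℝ)
    (hγsμ : ∀ t, γsμ t
      = (1 / 2 : ℝ) * ((∑ k, μr k t * σsq k) - ∑ k, (μr k t) ^ 2 * σsq k))
    (hγsπ : ∀ t, γsπ t
      = (1 / 2 : ℝ) * ((∑ k, μr k.rev t * σsq k) - ∑ k, (μr k.rev t) ^ 2 * σsq k))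
    (γμ γπ : ℝ → ℝ)
    (hγμ : ∀ t, γμ t = (∑ k, μr k t * g k) + γsμ t)
    (hγπ : ∀ t, γπ t = (∑ k, μr k.rev t * g k) + γsπ t) :
    (∀ t, γsπ t = γsμ t)
      ∧ ∀ᵐ t ∂(volume.restrict (Set.Ici (0:ℝ))), γμ t < γπ t := by
  have heq : ∀ t, γsπ t = γsμ t := by
    intro t
    rw [hγsπ t, hγsμ t]
    have e1 : ∑ k, μr k.rev t * σsq k = ∑ k, μr k t * σsq k :=
      Fintype.sum_bijective Fin.rev Fin.rev_bijective _ _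
        (fun k => by rw [hσsym k])
    have e2 : ∑ k, (μr k.rev t) ^ 2 * σsq k = ∑ k, (μr k t) ^ 2 * σsq k :=
      Fintype.sum_bijective Fin.rev Fin.rev_bijective _ _
        (fun k => by rw [hσsym k])
    rw [e1, e2]
  refine ⟨heq, ?_⟩
  filter_upwards [hrank] with t ht
  have hk := key_ineq n hn g hg0 hgpart (fun k => μr k t) ht
  rw [hγμ t, hγπ t, heq t]
  exact add_lt_add_of_lt_of_le hk le_rfl
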